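/- Let μ_1, ..., μ_m be sc-monomials of degrees at most d, suppose the intersection I := I_{μ_1} ∩ ⋯ ∩ I_{μ_m} of their intervals of definition is a nonempty open interval, and let g : I → ℝ be defined by g = Σ_{j=1}^m α_j μ_j for real coefficients α_1, ..., α_m. If there exists a real-analytic function g̃ : ℝ → ℝ whose restriction to I equals g, then g̃ is a polynomial of degree at most d. -/

import Mathlib

open Real Polynomial Set Filter Topology

noncomputable section scAux

lemma analyticAt_sqrt' {a : ℝ} (ha : 0 < a) : AnalyticAt ℝ Real.sqrt a := by
  have hg : AnalyticAt ℂ (fun z : ℂ => Complex.exp (Complex.log z * (1/2))) (a : ℂ) := by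
    refine AnalyticAt.cexp ?_
    refine AnalyticAt.mul ?_ analyticAt_const
    exact analyticAt_clog (by
      rw [Complex.mem_slitPlane_iff]
      left; simpa using ha)
  have h1 : AnalyticAt ℝ (fun x : ℝ =>
      Complex.reCLM ((fun z : ℂ => Complex.exp (Complex.log z * (1/2))) (Complex.ofRealCLM x))) a := by
    exact (Complex.reCLM.analyticAt _).comp ((hg.restrictScalars).comp (Complex.ofRealCLM.analyticAt a))
  refine h1.congr ?_
  filter_upwards [eventually_gt_nhds ha] with x hx
  simp only [Complex.ofRealCLM_apply, Complex.reCLM_apply]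
  rw [← Complex.ofReal_log hx.le]
  have : ((log x : ℝ) : ℂ) * (1/2) = ((log x * (1/2) : ℝ) : ℂ) := by push_cast; ring
  rw [this, ← Complex.ofReal_exp, Complex.ofReal_re]
  rw [Real.sqrt_eq_rpow, Real.rpow_def_of_pos hx]


lemma AnalyticAt.sqrt_comp {f : ℝ → ℝ} {x : ℝ} (hf : AnalyticAt ℝ f x) (hx : 0 < f x) :
    AnalyticAt ℝ (fun y => Real.sqrt (f y)) x := (analyticAt_sqrt' hx).comp hf

lemma analyticAt_eval (P : Polynomial ℝ) (x : ℝ) : AnalyticAt ℝ (fun y => P.eval y) x := by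
  have := (analyticAt_id (𝕜 := ℝ) (E := ℝ)).aeval_polynomial (z := x) P
  simpa using this

end scAux

section chunk2
open Filter

lemma analyticAt_list_sum {α : Type*} (l : List α) (f : α → ℝ → ℝ) (x : ℝ)
    (h : ∀ a ∈ l, AnalyticAt ℝ (f a) x) :
    AnalyticAt ℝ (fun y => (l.map (fun a => f a y)).sum) x := by
  induction l with
  | nil => simpa using analyticAt_const
  | cons a l ih =>
      simp only [List.map_cons, List.sum_cons]
      exact (h a (by simp)).add (ih (fun b hb => h b (by simp [hb])))

lemma analyticAt_list_prod {α : Type*} (l : List α) (f : α → ℝ → ℝ) (x : ℝ)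
    (h : ∀ a ∈ l, AnalyticAt ℝ (f a) x) :
    AnalyticAt ℝ (fun y => (l.map (fun a => f a y)).prod) x := by
  induction l with
  | nil => simpa using analyticAt_const
  | cons a l ih =>
      simp only [List.map_cons, List.prod_cons]
      exact (h a (by simp)).mul (ih (fun b hb => h b (by simp [hb])))

lemma left_sqrt_factor_eventually_zero {f F : ℝ → ℝ} {x₀ δ : ℝ} (hδ : 0 < δ)
    (hf : AnalyticAt ℝ f x₀) (hF : AnalyticAt ℝ F x₀)
    (heq : ∀ x ∈ Set.Ioo (x₀ - δ) x₀, f x = F x * Real.sqrt (x₀ - x)) :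
    ∀ᶠ x in 𝓝 x₀, f x = 0 := by
  have hmemIoo : ∀ᶠ x in 𝓝[<] x₀, x ∈ Set.Ioo (x₀ - δ) x₀ :=
    Ioo_mem_nhdsLT_of_mem (by constructor <;> simp [hδ] <;> linarith)
  by_cases hFtop : ∀ᶠ x in 𝓝 x₀, F x = 0
  · have hleft : ∀ᶠ x in 𝓝[<] x₀, f x = 0 := by
      filter_upwards [hmemIoo, hFtop.filter_mono nhdsWithin_le_nhds] with x hx hFx
      rw [heq x hx, hFx, zero_mul]
    refine hf.frequently_zero_iff_eventually_zero.1 ?_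
    exact (hleft.frequently).filter_mono (nhdsWithin_mono x₀ (fun y hy => ne_of_lt hy))
  · by_cases hftop : ∀ᶠ x in 𝓝 x₀, f x = 0
    · exact hftop
    exfalso
    have hford := analyticOrderAt_eq_top.not.2 hftop
    have hFord := analyticOrderAt_eq_top.not.2 hFtop
    obtain ⟨n, hn⟩ : ∃ n : ℕ, analyticOrderAt f x₀ = n := by
      cases h : analyticOrderAt f x₀ with
      | top => exact absurd h hford
      | coe n => exact ⟨n, rfl⟩
    obtain ⟨m, hm⟩ : ∃ m : ℕ, analyticOrderAt F x₀ = m := by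
      cases h : analyticOrderAt F x₀ with
      | top => exact absurd h hFord
      | coe m => exact ⟨m, rfl⟩
    obtain ⟨g, hg, hg0, hfg⟩ := (hf.analyticOrderAt_eq_natCast (n := n)).1 hn
    obtain ⟨h, hh, hh0, hFh⟩ := (hF.analyticOrderAt_eq_natCast (n := m)).1 hm
    -- key squared identity on the left filter
    have hkey : ∀ᶠ x in 𝓝[<] x₀,
        (x₀ - x) ^ (2*n) * (g x)^2 = (x₀ - x) ^ (2*m+1) * (h x)^2 := by
      filter_upwards [hmemIoo, hfg.filter_mono nhdsWithin_le_nhds,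
        hFh.filter_mono nhdsWithin_le_nhds, eventually_mem_nhdsWithin] with x hx hfx hFx hxlt
      have hxlt' : x < x₀ := hxlt
      have ht : (0:ℝ) ≤ x₀ - x := by linarith
      have h1 : f x = F x * Real.sqrt (x₀ - x) := heq x hx
      rw [hfx, hFx] at h1
      have h2 := congrArg (fun y : ℝ => y^2) h1
      simp only [smul_eq_mul, mul_pow, ← pow_mul] at h2
      rw [Real.sq_sqrt ht] at h2
      have hev : ∀ k : ℕ, (x - x₀)^(2*k) = (x₀ - x)^(2*k) := by
        intro k
        rw [show x - x₀ = -(x₀ - x) by ring, Even.neg_pow ⟨k, by ring⟩]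
      calc (x₀ - x) ^ (2*n) * (g x)^2 = (x - x₀)^(2*n) * (g x)^2 := by rw [hev]
        _ = (x - x₀)^(2*m) * (h x)^2 * (x₀ - x) := by
              rw [show (2:ℕ)*n = n*2 from mul_comm 2 n, show (2:ℕ)*m = m*2 from mul_comm 2 m]
              exact h2
        _ = (x₀ - x)^(2*m) * (h x)^2 * (x₀ - x) := by rw [hev]
        _ = (x₀ - x)^(2*m+1) * (h x)^2 := by ring
    rcases le_or_gt (2*n) (2*m+1) with hle | hlt
    · -- g x₀ ^ 2 = 0
      have hkey2 : ∀ᶠ x in 𝓝[<] x₀, (g x)^2 = (x₀ - x)^(2*m+1-2*n) * (h x)^2 := by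
        filter_upwards [hkey, eventually_mem_nhdsWithin] with x hx hxlt
        have hxlt' : x < x₀ := hxlt
        have ht0 : x₀ - x ≠ 0 := by intro hc; linarith [sub_eq_zero.1 hc]
        have : (x₀ - x) ^ (2*m+1) = (x₀ - x)^(2*n) * (x₀ - x)^(2*m+1-2*n) := by
          rw [← pow_add]; congr 1; omega
        rw [this, mul_assoc] at hx
        exact mul_left_cancel₀ (pow_ne_zero _ ht0) hx
      have hexp : 1 ≤ 2*m+1-2*n ∨ 2*m+1-2*n = 0 := by omega
      have hexp1 : 1 ≤ 2*m+1-2*n := by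
        rcases hexp with h1 | h0
        · exact h1
        · omega
      have hT1 : Filter.Tendsto (fun x => (g x)^2) (𝓝[<] x₀) (𝓝 ((g x₀)^2)) :=
        ((hg.continuousAt.pow 2).tendsto).mono_left nhdsWithin_le_nhds
      have hT2 : Filter.Tendsto (fun x => (x₀ - x)^(2*m+1-2*n) * (h x)^2) (𝓝[<] x₀)
          (𝓝 (0 * (h x₀)^2)) := by
        have : ContinuousAt (fun x => (x₀ - x)^(2*m+1-2*n) * (h x)^2) x₀ :=
          (((continuousAt_const.sub continuousAt_id).pow _)).mul (hh.continuousAt.pow 2)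
        have h0 : (x₀ - x₀)^(2*m+1-2*n) = 0 := by
          rw [sub_self, zero_pow]; omega
        have := this.tendsto.mono_left (nhdsWithin_le_nhds (s := Set.Iio x₀))
        rwa [h0] at this
      have := tendsto_nhds_unique (hT1.congr' hkey2) hT2
      simp only [zero_mul] at this
      exact hg0 (pow_eq_zero_iff two_ne_zero |>.1 this)
    · -- h x₀ ^ 2 = 0
      have hkey2 : ∀ᶠ x in 𝓝[<] x₀, (h x)^2 = (x₀ - x)^(2*n-(2*m+1)) * (g x)^2 := by
        filter_upwards [hkey, eventually_mem_nhdsWithin] with x hx hxlt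
        have hxlt' : x < x₀ := hxlt
        have ht0 : x₀ - x ≠ 0 := by intro hc; linarith [sub_eq_zero.1 hc]
        have : (x₀ - x) ^ (2*n) = (x₀ - x)^(2*m+1) * (x₀ - x)^(2*n-(2*m+1)) := by
          rw [← pow_add]; congr 1; omega
        rw [this, mul_assoc] at hx
        exact (mul_left_cancel₀ (pow_ne_zero _ ht0) hx.symm)
      have hT1 : Filter.Tendsto (fun x => (h x)^2) (𝓝[<] x₀) (𝓝 ((h x₀)^2)) :=
        ((hh.continuousAt.pow 2).tendsto).mono_left nhdsWithin_le_nhds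
      have hT2 : Filter.Tendsto (fun x => (x₀ - x)^(2*n-(2*m+1)) * (g x)^2) (𝓝[<] x₀)
          (𝓝 (0 * (g x₀)^2)) := by
        have : ContinuousAt (fun x => (x₀ - x)^(2*n-(2*m+1)) * (g x)^2) x₀ :=
          (((continuousAt_const.sub continuousAt_id).pow _)).mul (hg.continuousAt.pow 2)
        have h0 : (x₀ - x₀)^(2*n-(2*m+1)) = 0 := by
          rw [sub_self, zero_pow]; omega
        have := this.tendsto.mono_left (nhdsWithin_le_nhds (s := Set.Iio x₀))
        rwa [h0] at this
      have := tendsto_nhds_unique (hT1.congr' hkey2) hT2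
      simp only [zero_mul] at this
      exact hh0 (pow_eq_zero_iff two_ne_zero |>.1 this)

end chunk2

section chunk3
open Polynomial

def RadOK (P : Polynomial ℝ) : Prop :=
  P ≠ 0 ∧ P.natDegree ≤ 2 ∧ (∀ x : ℝ, P.eval x = 0 → P.derivative.eval x ≠ 0) ∧
    (P.natDegree ≠ 0 → ∃ r : ℝ, P.eval r = 0)

def TermOK (d : ℕ) (t : Polynomial ℝ × List (Polynomial ℝ)) : Prop :=
  (∀ P ∈ t.2, RadOK P) ∧ 2 * t.1.natDegree + (t.2.map Polynomial.natDegree).sum ≤ 2 * d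

def tmeasure (terms : List (Polynomial ℝ × List (Polynomial ℝ))) : ℕ :=
  (terms.map fun t => (t.2.map fun P => 1 + P.natDegree).sum).sum

noncomputable def gfun (terms : List (Polynomial ℝ × List (Polynomial ℝ))) (x : ℝ) : ℝ :=
  (terms.map fun t => t.1.eval x * (t.2.map fun P => Real.sqrt (P.eval x)).prod).sum

lemma radOK_of_deg_le_one {P : Polynomial ℝ} (h0 : P ≠ 0) (h1 : P.natDegree ≤ 1) : RadOK P := by
  refine ⟨h0, h1.trans one_le_two, ?_, ?_⟩
  · intro x hx
    rcases Nat.eq_or_lt_of_le h1 with hd1 | hd0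
    · have hc : P.coeff 1 ≠ 0 := by
        have := Polynomial.leadingCoeff_ne_zero.2 h0
        rwa [Polynomial.leadingCoeff, hd1] at this
      have hP := Polynomial.eq_X_add_C_of_natDegree_le_one h1
      rw [hP]
      simp [hc]
    · exfalso
      have hd : P.natDegree = 0 := by omega
      obtain ⟨c, hc⟩ := Polynomial.natDegree_eq_zero.1 hd
      rw [← hc] at h0 hx
      simp at hx
      exact h0 (by rw [hx, map_zero])
  · intro hd
    have hd1 : P.natDegree = 1 := by omega
    have hc : P.coeff 1 ≠ 0 := by
      have := Polynomial.leadingCoeff_ne_zero.2 h0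
      rwa [Polynomial.leadingCoeff, hd1] at this
    refine ⟨-(P.coeff 0) / P.coeff 1, ?_⟩
    have hP := Polynomial.eq_X_add_C_of_natDegree_le_one h1
    rw [hP]
    simp only [Polynomial.eval_add, Polynomial.eval_mul, Polynomial.eval_C, Polynomial.eval_X]
    field_simp
    have e0 : (C (P.coeff 1) * X + C (P.coeff 0)).coeff 0 = P.coeff 0 := by simp
    have e1 : (C (P.coeff 1) * X + C (P.coeff 0)).coeff 1 = P.coeff 1 := by simp
    rw [e0, e1, mul_div_cancel_left₀ _ hc]
    ring

open scoped Classical in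
noncomputable def transf (x₀ : ℝ) (P : Polynomial ℝ) : Polynomial ℝ :=
  if P.eval x₀ = 0 then -(P /ₘ (X - C x₀)) else P

open scoped Classical in
noncomputable def vcount (x₀ : ℝ) : List (Polynomial ℝ) → ℕ
  | [] => 0
  | P :: l => vcount x₀ l + (if P.eval x₀ = 0 then 1 else 0)

lemma transf_of_root {x₀ : ℝ} {P : Polynomial ℝ} (h : P.eval x₀ = 0) :
    transf x₀ P = -(P /ₘ (X - C x₀)) := by rw [transf, if_pos h]

lemma transf_of_not_root {x₀ : ℝ} {P : Polynomial ℝ} (h : P.eval x₀ ≠ 0) :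
    transf x₀ P = P := by rw [transf, if_neg h]

lemma transf_mul_eq {x₀ : ℝ} {P : Polynomial ℝ} (h : P.eval x₀ = 0) :
    P = (C x₀ - X) * transf x₀ P := by
  have h2 := (Polynomial.mul_divByMonic_eq_iff_isRoot (p := P) (a := x₀)).2 h
  calc P = (X - C x₀) * (P /ₘ (X - C x₀)) := h2.symm
    _ = (C x₀ - X) * transf x₀ P := by rw [transf_of_root h]; ring

lemma transf_eval_eq {x₀ : ℝ} {P : Polynomial ℝ} (h : P.eval x₀ = 0) (x : ℝ) :
    P.eval x = (x₀ - x) * (transf x₀ P).eval x := by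
  conv_lhs => rw [transf_mul_eq h]
  simp [Polynomial.eval_mul]

lemma transf_ne_zero {x₀ : ℝ} {P : Polynomial ℝ} (hP : P ≠ 0) (h : P.eval x₀ = 0) :
    transf x₀ P ≠ 0 := by
  intro hc
  apply hP
  rw [transf_mul_eq h, hc, mul_zero]

lemma transf_natDegree {x₀ : ℝ} {P : Polynomial ℝ} (h : P.eval x₀ = 0) :
    (transf x₀ P).natDegree = P.natDegree - 1 := by
  rw [transf_of_root h, Polynomial.natDegree_neg,
    Polynomial.natDegree_divByMonic P (Polynomial.monic_X_sub_C x₀), Polynomial.natDegree_X_sub_C]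

lemma transf_eval_x₀_ne {x₀ : ℝ} {P : Polynomial ℝ} (hOK : RadOK P) (h : P.eval x₀ = 0) :
    (transf x₀ P).eval x₀ ≠ 0 := by
  have hder := hOK.2.2.1 x₀ h
  intro hc
  apply hder
  have hPm := transf_mul_eq h
  have : P.derivative = (C x₀ - X).derivative * transf x₀ P + (C x₀ - X) * (transf x₀ P).derivative := by
    conv_lhs => rw [hPm]
    rw [Polynomial.derivative_mul]
  rw [this]
  simp [hc]

lemma radOK_transf {x₀ : ℝ} {P : Polynomial ℝ} (hOK : RadOK P) : RadOK (transf x₀ P) := by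
  by_cases h : P.eval x₀ = 0
  · have h0 : P.natDegree ≠ 0 := by
      intro hd
      obtain ⟨c, hc⟩ := Polynomial.natDegree_eq_zero.1 hd
      rw [← hc] at h hOK
      simp at h
      exact hOK.1 (by rw [h, map_zero])
    refine radOK_of_deg_le_one (transf_ne_zero hOK.1 h) ?_
    rw [transf_natDegree h]
    have := hOK.2.1
    omega
  · rw [transf_of_not_root h]; exact hOK

end chunk3

section chunk4
open Polynomial

lemma sqrt_pow_even (u : ℝ) (hu : 0 ≤ u) (k : ℕ) : Real.sqrt u ^ (2*k) = u^k := by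
  rw [pow_mul, Real.sq_sqrt hu]

lemma sqrt_pow_odd (u : ℝ) (hu : 0 ≤ u) (k : ℕ) :
    Real.sqrt u ^ (2*k+1) = u^k * Real.sqrt u := by
  rw [pow_succ, sqrt_pow_even u hu k]

lemma prod_sqrt_factor (x₀ : ℝ) (l : List (Polynomial ℝ)) (x : ℝ) (hx : x ≤ x₀) :
    (l.map (fun P => Real.sqrt (P.eval x))).prod =
      Real.sqrt (x₀ - x) ^ (vcount x₀ l) *
        (l.map (fun P => Real.sqrt ((transf x₀ P).eval x))).prod := by
  induction l with
  | nil => simp [vcount]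
  | cons P l ih =>
    simp only [List.map_cons, List.prod_cons, vcount]
    by_cases h : P.eval x₀ = 0
    · rw [if_pos h, transf_eval_eq h x, Real.sqrt_mul (by linarith) _, ih, pow_succ]
      ring
    · rw [if_neg h, transf_of_not_root h, ih]
      ring

open scoped Classical in
noncomputable def newt (x₀ : ℝ) (t : Polynomial ℝ × List (Polynomial ℝ)) :
    Polynomial ℝ × List (Polynomial ℝ) :=
  if Even (vcount x₀ t.2) then (t.1 * (C x₀ - X)^(vcount x₀ t.2 / 2), t.2.map (transf x₀))
  else (0, [])

open scoped Classical in
noncomputable def oddpart (x₀ : ℝ) (t : Polynomial ℝ × List (Polynomial ℝ)) (x : ℝ) : ℝ :=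
  if Even (vcount x₀ t.2) then 0
  else t.1.eval x * (x₀ - x)^(vcount x₀ t.2 / 2) *
    ((t.2.map (transf x₀)).map (fun P => Real.sqrt (P.eval x))).prod

lemma term_decomp (x₀ x : ℝ) (hx : x ≤ x₀) (t : Polynomial ℝ × List (Polynomial ℝ)) :
    t.1.eval x * (t.2.map (fun P => Real.sqrt (P.eval x))).prod =
      (newt x₀ t).1.eval x * ((newt x₀ t).2.map (fun P => Real.sqrt (P.eval x))).prod
        + oddpart x₀ t x * Real.sqrt (x₀ - x) := by
  rw [prod_sqrt_factor x₀ t.2 x hx]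
  by_cases h : Even (vcount x₀ t.2)
  · obtain ⟨k, hk⟩ := h
    have hk2 : vcount x₀ t.2 = 2*k := by omega
    have hdiv : vcount x₀ t.2 / 2 = k := by omega
    rw [newt, oddpart, if_pos ⟨k, hk⟩, if_pos ⟨k, hk⟩]
    rw [hdiv, hk2, sqrt_pow_even (x₀ - x) (by linarith) k]
    simp only [Polynomial.eval_mul, Polynomial.eval_pow, Polynomial.eval_sub,
      Polynomial.eval_C, Polynomial.eval_X, List.map_map, Function.comp_def]
    ring
  · have hodd := Nat.not_even_iff_odd.1 h
    obtain ⟨k, hk⟩ := hodd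
    have hdiv : vcount x₀ t.2 / 2 = k := by omega
    rw [newt, oddpart, if_neg h, if_neg h]
    rw [hdiv, hk, sqrt_pow_odd (x₀ - x) (by linarith) k]
    simp only [Polynomial.eval_zero, zero_mul, List.map_map, Function.comp_def]
    ring

lemma gfun_decomp (x₀ x : ℝ) (hx : x ≤ x₀) (terms : List (Polynomial ℝ × List (Polynomial ℝ))) :
    gfun terms x = gfun (terms.map (newt x₀)) x
      + (terms.map (fun t => oddpart x₀ t x)).sum * Real.sqrt (x₀ - x) := by
  induction terms with
  | nil => simp [gfun]
  | cons t terms ih =>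
    simp only [gfun, List.map_cons, List.sum_cons] at ih ⊢
    rw [term_decomp x₀ x hx t, ih]
    ring

end chunk4

section chunk5a
open Polynomial Filter

lemma eventually_list {α : Type*} (l : List α) (p : α → ℝ → Prop) (F : Filter ℝ)
    (h : ∀ a ∈ l, ∀ᶠ x in F, p a x) : ∀ᶠ x in F, ∀ a ∈ l, p a x := by
  induction l with
  | nil => simp
  | cons a l ih =>
    filter_upwards [h a (by simp), ih (fun b hb => h b (by simp [hb]))] with x h1 h2
    intro b hb
    rcases List.mem_cons.1 hb with rfl | hb
    · exact h1
    · exact h2 b hb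

lemma analyticAt_gfun (terms : List (Polynomial ℝ × List (Polynomial ℝ))) (x : ℝ)
    (hpos : ∀ t ∈ terms, ∀ P ∈ t.2, 0 < P.eval x) : AnalyticAt ℝ (gfun terms) x := by
  unfold gfun
  refine analyticAt_list_sum terms _ x (fun t ht => ?_)
  exact (analyticAt_eval t.1 x).mul
    (analyticAt_list_prod t.2 _ x (fun P hP => (analyticAt_eval P x).sqrt_comp (hpos t ht P hP)))

lemma sum_nat_le_of_pointwise {α : Type*} (l : List α) (f g : α → ℕ)
    (h : ∀ a ∈ l, f a ≤ g a) : (l.map f).sum ≤ (l.map g).sum := by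
  induction l with
  | nil => simp
  | cons a l ih =>
    simp only [List.map_cons, List.sum_cons]
    exact Nat.add_le_add (h a (by simp)) (ih (fun b hb => h b (by simp [hb])))

lemma sum_nat_lt_of_pointwise {α : Type*} (l : List α) (f g : α → ℕ)
    (h : ∀ a ∈ l, f a ≤ g a) (a₀ : α) (ha₀ : a₀ ∈ l) (hlt : f a₀ < g a₀) :
    (l.map f).sum < (l.map g).sum := by
  induction l with
  | nil => simp at ha₀
  | cons a l ih =>
    simp only [List.map_cons, List.sum_cons]
    rcases List.mem_cons.1 ha₀ with rfl | ha₀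
    · exact Nat.add_lt_add_of_lt_of_le hlt (sum_nat_le_of_pointwise l f g (fun b hb => h b (by simp [hb])))
    · exact Nat.add_lt_add_of_le_of_lt (h a (by simp)) (ih (fun b hb => h b (by simp [hb])) ha₀)

lemma le_sum_of_mem' {α : Type*} (l : List α) (f : α → ℕ) (a : α) (ha : a ∈ l) :
    f a ≤ (l.map f).sum := by
  induction l with
  | nil => simp at ha
  | cons b l ih =>
    simp only [List.map_cons, List.sum_cons]
    rcases List.mem_cons.1 ha with rfl | hm
    · omega
    · have := ih hm; omega

lemma root_natDegree_pos {P : Polynomial ℝ} {x₀ : ℝ} (h0 : P ≠ 0) (h : P.eval x₀ = 0) :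
    1 ≤ P.natDegree := by
  by_contra hd
  push_neg at hd
  obtain ⟨c, hc⟩ := Polynomial.natDegree_eq_zero.1 (by omega : P.natDegree = 0)
  rw [← hc] at h h0
  simp at h
  exact h0 (by rw [h, map_zero])

lemma transf_natDegree_le (x₀ : ℝ) (P : Polynomial ℝ) :
    (transf x₀ P).natDegree ≤ P.natDegree := by
  by_cases h : P.eval x₀ = 0
  · rw [transf_natDegree h]; omega
  · rw [transf_of_not_root h]

def termMeasure (t : Polynomial ℝ × List (Polynomial ℝ)) : ℕ :=
  (t.2.map fun P => 1 + P.natDegree).sum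

lemma tmeasure_eq (terms : List (Polynomial ℝ × List (Polynomial ℝ))) :
    tmeasure terms = (terms.map termMeasure).sum := rfl

lemma termMeasure_newt_le (x₀ : ℝ) (t : Polynomial ℝ × List (Polynomial ℝ)) :
    termMeasure (newt x₀ t) ≤ termMeasure t := by
  rw [newt]
  by_cases h : Even (vcount x₀ t.2)
  · rw [if_pos h]
    unfold termMeasure
    simp only [List.map_map]
    exact sum_nat_le_of_pointwise t.2 _ _ (fun P hP => by
      simp only [Function.comp_apply]
      exact Nat.add_le_add_left (transf_natDegree_le x₀ P) 1)
  · rw [if_neg h]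
    unfold termMeasure
    simp

lemma termMeasure_newt_lt (x₀ : ℝ) (t : Polynomial ℝ × List (Polynomial ℝ))
    (hOK : ∀ P ∈ t.2, RadOK P) (P₀ : Polynomial ℝ) (hP₀ : P₀ ∈ t.2) (hroot : P₀.eval x₀ = 0) :
    termMeasure (newt x₀ t) < termMeasure t := by
  have hP₀deg : 1 ≤ P₀.natDegree := root_natDegree_pos (hOK P₀ hP₀).1 hroot
  rw [newt]
  by_cases h : Even (vcount x₀ t.2)
  · rw [if_pos h]
    unfold termMeasure
    simp only [List.map_map]
    refine sum_nat_lt_of_pointwise t.2 _ _ (fun P hP => by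
      simp only [Function.comp_apply]
      exact Nat.add_le_add_left (transf_natDegree_le x₀ P) 1) P₀ hP₀ ?_
    simp only [Function.comp_apply]
    rw [transf_natDegree hroot]
    omega
  · rw [if_neg h]
    unfold termMeasure
    simp only [List.map_nil, List.sum_nil]
    have := le_sum_of_mem' t.2 (fun P => 1 + P.natDegree) P₀ hP₀
    omega

lemma sum_deg_transf (x₀ : ℝ) (l : List (Polynomial ℝ)) (h : ∀ P ∈ l, RadOK P) :
    ((l.map (transf x₀)).map Polynomial.natDegree).sum + vcount x₀ l
      ≤ (l.map Polynomial.natDegree).sum := by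
  induction l with
  | nil => simp [vcount]
  | cons P l ih =>
    have ihl := ih (fun Q hQ => h Q (by simp [hQ]))
    simp only [List.map_cons, List.sum_cons, vcount]
    by_cases hr : P.eval x₀ = 0
    · rw [if_pos hr]
      have h1 : 1 ≤ P.natDegree := root_natDegree_pos (h P (by simp)).1 hr
      rw [transf_natDegree hr]
      omega
    · rw [if_neg hr, transf_of_not_root hr]
      omega

lemma termOK_newt (x₀ : ℝ) (d : ℕ) (t : Polynomial ℝ × List (Polynomial ℝ))
    (hOK : TermOK d t) : TermOK d (newt x₀ t) := by
  rw [newt]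
  by_cases h : Even (vcount x₀ t.2)
  · rw [if_pos h]
    constructor
    · intro P hP
      simp only [List.mem_map] at hP
      obtain ⟨Q, hQ, rfl⟩ := hP
      exact radOK_transf (hOK.1 Q hQ)
    · simp only
      have hdeg1 : (t.1 * (C x₀ - X)^(vcount x₀ t.2 / 2)).natDegree
          ≤ t.1.natDegree + vcount x₀ t.2 / 2 := by
        refine (Polynomial.natDegree_mul_le).trans ?_
        refine Nat.add_le_add_left ?_ _
        refine (Polynomial.natDegree_pow_le).trans ?_
        have : (C x₀ - X : Polynomial ℝ).natDegree ≤ 1 := by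
          refine (Polynomial.natDegree_sub_le _ _).trans ?_
          simp
        calc vcount x₀ t.2 / 2 * (C x₀ - X : Polynomial ℝ).natDegree
            ≤ vcount x₀ t.2 / 2 * 1 := Nat.mul_le_mul_left _ this
          _ = vcount x₀ t.2 / 2 := by omega
      have hsum := sum_deg_transf x₀ t.2 hOK.1
      have hbound := hOK.2
      simp only [List.map_map] at *
      have : 2 * (vcount x₀ t.2 / 2) ≤ vcount x₀ t.2 := by omega
      omega
  · rw [if_neg h]
    exact ⟨by simp, by simp⟩

end chunk5a

section chunk5b
open Polynomial Filter Set

lemma pos_on_extension {P : Polynomial ℝ} {a b x₀ : ℝ} (hab : a < b) (hbx : b ≤ x₀)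
    (hpos : ∀ x ∈ Set.Ioo a b, 0 < P.eval x)
    (hnoroot : ∀ x, b ≤ x → x < x₀ → P.eval x ≠ 0) :
    ∀ x ∈ Set.Ioo a x₀, 0 < P.eval x := by
  intro x hx
  rcases lt_or_ge x b with h | h
  · exact hpos x ⟨hx.1, h⟩
  · have hc : (a+b)/2 ∈ Set.Ioo a b := ⟨by linarith, by linarith⟩
    by_contra hle
    push_neg at hle
    have hcx : (a+b)/2 ≤ x := by linarith [hc.2]
    have hcont : ContinuousOn (fun y => P.eval y) (Set.Icc ((a+b)/2) x) :=
      P.continuous.continuousOn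
    obtain ⟨z, hz, hz0⟩ := intermediate_value_Icc' hcx hcont ⟨hle, (hpos _ hc).le⟩
    rcases lt_or_ge z b with hzb | hzb
    · exact absurd hz0 (ne_of_gt (hpos z ⟨lt_of_lt_of_le hc.1 hz.1, hzb⟩))
    · exact hnoroot z hzb (lt_of_le_of_lt hz.2 hx.2) hz0

lemma rightstep (d : ℕ) (terms : List (Polynomial ℝ × List (Polynomial ℝ))) (gt : ℝ → ℝ)
    (a b : ℝ) (hab : a < b)
    (hOK : ∀ t ∈ terms, TermOK d t) (hgt : ∀ x, AnalyticAt ℝ gt x)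
    (hpos : ∀ x ∈ Set.Ioo a b, ∀ t ∈ terms, ∀ P ∈ t.2, 0 < P.eval x)
    (heq : ∀ x ∈ Set.Ioo a b, gt x = gfun terms x)
    (hroot : ∃ t ∈ terms, ∃ P ∈ t.2, ∃ r, b ≤ r ∧ P.eval r = 0) :
    ∃ (terms' : List (Polynomial ℝ × List (Polynomial ℝ))) (a' b' : ℝ),
      tmeasure terms' < tmeasure terms ∧ (∀ t ∈ terms', TermOK d t) ∧ a' < b' ∧
      (∀ x ∈ Set.Ioo a' b', ∀ t ∈ terms', ∀ P ∈ t.2, 0 < P.eval x) ∧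
      (∀ x ∈ Set.Ioo a' b', gt x = gfun terms' x) := by
  classical
  set S : Set ℝ := {x | b ≤ x ∧ ∃ t ∈ terms, ∃ P ∈ t.2, P.eval x = 0} with hSdef
  have hSfin : S.Finite := by
    set Φ : Polynomial ℝ := (terms.map (fun t => t.2.prod)).prod with hΦdef
    have hΦ : Φ ≠ 0 := by
      refine List.prod_ne_zero ?_
      intro hmem
      rw [List.mem_map] at hmem
      obtain ⟨t, ht, ht0⟩ := hmem
      have h0mem : (0 : Polynomial ℝ) ∈ t.2 := List.prod_eq_zero_iff.1 ht0
      exact ((hOK t ht).1 0 h0mem).1 rfl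
    refine (Polynomial.finite_setOf_isRoot hΦ).subset ?_
    rintro x ⟨hbx, t, ht, P, hP, hev⟩
    show Φ.IsRoot x
    have h1 : Polynomial.eval x t.2.prod = 0 := by
      rw [Polynomial.eval_list_prod]
      exact List.prod_eq_zero (List.mem_map.2 ⟨P, hP, hev⟩)
    rw [Polynomial.IsRoot, hΦdef, Polynomial.eval_list_prod]
    refine List.prod_eq_zero ?_
    rw [List.map_map]
    exact List.mem_map.2 ⟨t, ht, by simpa using h1⟩
  have hSne : S.Nonempty := by
    obtain ⟨t, ht, P, hP, r, hbr, hr⟩ := hroot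
    exact ⟨r, hbr, t, ht, P, hP, hr⟩
  set x₀ : ℝ := sInf S with hx₀def
  have hx₀S : x₀ ∈ S := hSne.csInf_mem hSfin
  have hbx₀ : b ≤ x₀ := le_csInf hSne (fun y hy => hy.1)
  have hax₀ : a < x₀ := lt_of_lt_of_le hab hbx₀
  have hmin : ∀ y ∈ S, x₀ ≤ y := fun y hy => csInf_le hSfin.bddBelow hy
  have hposext : ∀ t ∈ terms, ∀ P ∈ t.2, ∀ x ∈ Set.Ioo a x₀, 0 < P.eval x := by
    intro t ht P hP
    refine pos_on_extension hab hbx₀ (fun x hx => hpos x hx t ht P hP) ?_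
    intro x hbxx hxx₀ hev
    exact absurd (hmin x ⟨hbxx, t, ht, P, hP, hev⟩) (not_le.2 hxx₀)
  have hpos₀ : ∀ t ∈ terms, ∀ P ∈ t.2, 0 < (transf x₀ P).eval x₀ := by
    intro t ht P hP
    have hIoo : Set.Ioo a x₀ ∈ 𝓝[<] x₀ := Ioo_mem_nhdsLT_of_mem ⟨hax₀, le_refl x₀⟩
    have hnn : 0 ≤ (transf x₀ P).eval x₀ := by
      have htd : Tendsto (fun x => (transf x₀ P).eval x) (𝓝[<] x₀)
          (𝓝 ((transf x₀ P).eval x₀)) :=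
        ((transf x₀ P).continuous.tendsto x₀).mono_left nhdsWithin_le_nhds
      refine ge_of_tendsto htd ?_
      filter_upwards [hIoo] with x hx
      by_cases hr : P.eval x₀ = 0
      · have hpx := hposext t ht P hP x hx
        rw [transf_eval_eq hr] at hpx
        have hxlt : 0 < x₀ - x := by linarith [hx.2]
        nlinarith
      · rw [transf_of_not_root hr]
        exact (hposext t ht P hP x hx).le
    rcases hnn.lt_or_eq with h | h
    · exact h
    · exfalso
      by_cases hr : P.eval x₀ = 0
      · exact transf_eval_x₀_ne ((hOK t ht).1 P hP) hr h.symm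
      · rw [transf_of_not_root hr] at h
        exact hr h.symm
  have heq₂ : ∀ x ∈ Set.Ioo a x₀, gt x = gfun terms x := by
    have h1 : AnalyticOnNhd ℝ gt (Set.Ioo a x₀) := fun x _ => hgt x
    have h2 : AnalyticOnNhd ℝ (gfun terms) (Set.Ioo a x₀) := fun x hx =>
      analyticAt_gfun terms x (fun t ht P hP => hposext t ht P hP x hx)
    have hmid : (a+b)/2 ∈ Set.Ioo a x₀ := ⟨by linarith, by linarith⟩
    have hev : gt =ᶠ[𝓝 ((a+b)/2)] gfun terms :=
      eventually_of_mem (isOpen_Ioo.mem_nhds (⟨by linarith, by linarith⟩ : (a+b)/2 ∈ Set.Ioo a b)) heq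
    exact fun x hx => h1.eqOn_of_preconnected_of_eventuallyEq h2 isPreconnected_Ioo hmid hev hx
  set E : ℝ → ℝ := gfun (terms.map (newt x₀)) with hEdef
  set Fo : ℝ → ℝ := fun x => (terms.map fun t => oddpart x₀ t x).sum with hFodef
  have hdecomp : ∀ x ∈ Set.Ioo a x₀, gt x - E x = Fo x * Real.sqrt (x₀ - x) := by
    intro x hx
    rw [heq₂ x hx, gfun_decomp x₀ x hx.2.le terms]
    ring
  have hmemnewt : ∀ t' ∈ terms.map (newt x₀), ∀ P ∈ t'.2,
      ∃ t ∈ terms, ∃ Q ∈ t.2, P = transf x₀ Q := by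
    intro t' ht' P hP
    rw [List.mem_map] at ht'
    obtain ⟨t, ht, rfl⟩ := ht'
    rw [newt] at hP
    by_cases h : Even (vcount x₀ t.2)
    · rw [if_pos h] at hP
      simp only [List.mem_map] at hP
      obtain ⟨Q, hQ, rfl⟩ := hP
      exact ⟨t, ht, Q, hQ, rfl⟩
    · rw [if_neg h] at hP
      simp at hP
  have hEan : AnalyticAt ℝ E x₀ := by
    refine analyticAt_gfun _ x₀ ?_
    intro t' ht' P hP
    obtain ⟨t, ht, Q, hQ, rfl⟩ := hmemnewt t' ht' P hP
    exact hpos₀ t ht Q hQ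
  have hFan : AnalyticAt ℝ Fo x₀ := by
    refine analyticAt_list_sum terms (fun t x => oddpart x₀ t x) x₀ ?_
    intro t ht
    unfold oddpart
    by_cases h : Even (vcount x₀ t.2)
    · simp only [if_pos h]
      exact analyticAt_const
    · simp only [if_neg h]
      refine ((analyticAt_eval t.1 x₀).mul
        ((analyticAt_const.sub (analyticAt_id)).pow _)).mul ?_
      refine analyticAt_list_prod _ _ x₀ ?_
      intro P hP
      simp only [List.mem_map] at hP
      obtain ⟨Q, hQ, rfl⟩ := hP
      exact (analyticAt_eval _ x₀).sqrt_comp (hpos₀ t ht Q hQ)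
  have hzero : ∀ᶠ x in 𝓝 x₀, gt x - E x = 0 := by
    refine left_sqrt_factor_eventually_zero (δ := x₀ - a) (by linarith)
      ((hgt x₀).sub hEan) hFan ?_
    intro x hx
    refine hdecomp x ?_
    rwa [sub_sub_cancel] at hx
  have heventpos : ∀ᶠ x in 𝓝 x₀, ∀ t ∈ terms, ∀ P ∈ t.2, 0 < (transf x₀ P).eval x := by
    refine eventually_list terms _ _ ?_
    intro t ht
    refine eventually_list t.2 (fun P x => 0 < (transf x₀ P).eval x) _ ?_
    intro P hP
    exact ((transf x₀ P).continuous.tendsto x₀).eventually (eventually_gt_nhds (hpos₀ t ht P hP))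
  obtain ⟨ε, hε, hball⟩ := Metric.eventually_nhds_iff.1 (hzero.and heventpos)
  refine ⟨terms.map (newt x₀), max a (x₀ - ε), x₀, ?_, ?_, ?_, ?_, ?_⟩
  · rw [tmeasure_eq, tmeasure_eq, List.map_map]
    obtain ⟨t₁, ht₁, P₁, hP₁, hr₁⟩ := hx₀S.2
    refine sum_nat_lt_of_pointwise terms _ _ (fun t ht => termMeasure_newt_le x₀ t) t₁ ht₁ ?_
    exact termMeasure_newt_lt x₀ t₁ (hOK t₁ ht₁).1 P₁ hP₁ hr₁
  · intro t' ht'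
    rw [List.mem_map] at ht'
    obtain ⟨t, ht, rfl⟩ := ht'
    exact termOK_newt x₀ d t (hOK t ht)
  · exact max_lt hax₀ (by linarith)
  · intro x hx t' ht' P hP
    obtain ⟨t, ht, Q, hQ, rfl⟩ := hmemnewt t' ht' P hP
    have hd : dist x x₀ < ε := by
      rw [Real.dist_eq, abs_lt]
      constructor
      · have := hx.1
        have := le_max_right a (x₀ - ε)
        linarith [lt_of_le_of_lt (le_max_right a (x₀ - ε)) hx.1]
      · linarith [hx.2]
    exact (hball hd).2 t ht Q hQ
  · intro x hx
    have hd : dist x x₀ < ε := by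
      rw [Real.dist_eq, abs_lt]
      constructor
      · linarith [lt_of_le_of_lt (le_max_right a (x₀ - ε)) hx.1]
      · linarith [hx.2]
    have := (hball hd).1
    linarith [this]

end chunk5b

section chunk6
open Polynomial Filter Set

noncomputable def rP (P : Polynomial ℝ) : Polynomial ℝ := P.comp (-X)

lemma rP_eval (P : Polynomial ℝ) (x : ℝ) : (rP P).eval x = P.eval (-x) := by
  simp [rP, Polynomial.eval_comp]

lemma rP_natDegree (P : Polynomial ℝ) : (rP P).natDegree = P.natDegree := by
  rw [rP, Polynomial.natDegree_comp]
  simp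

lemma rP_ne_zero {P : Polynomial ℝ} (h : P ≠ 0) : rP P ≠ 0 := by
  intro hc
  apply h
  apply Polynomial.funext
  intro r
  have := congrArg (Polynomial.eval (-r)) hc
  rw [rP_eval] at this
  simpa using this

lemma rP_radOK {P : Polynomial ℝ} (h : RadOK P) : RadOK (rP P) := by
  obtain ⟨h0, h2, h3, h4⟩ := h
  refine ⟨rP_ne_zero h0, by rw [rP_natDegree]; exact h2, ?_, ?_⟩
  · intro x hx
    rw [rP_eval] at hx
    have hd : (rP P).derivative = -X.derivative * (P.derivative).comp (-X) := by
      rw [rP, Polynomial.derivative_comp]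
      simp
    rw [hd]
    simp only [Polynomial.derivative_X, Polynomial.eval_mul, Polynomial.eval_neg,
      Polynomial.eval_one, Polynomial.eval_comp, Polynomial.eval_X]
    simpa using h3 (-x) hx
  · intro hd
    rw [rP_natDegree] at hd
    obtain ⟨r, hr⟩ := h4 hd
    exact ⟨-r, by rw [rP_eval, neg_neg]; exact hr⟩

noncomputable def rT (t : Polynomial ℝ × List (Polynomial ℝ)) : Polynomial ℝ × List (Polynomial ℝ) :=
  (t.1.comp (-X), t.2.map rP)

lemma rT_termOK {d : ℕ} {t : Polynomial ℝ × List (Polynomial ℝ)} (h : TermOK d t) :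
    TermOK d (rT t) := by
  obtain ⟨h1, h2⟩ := h
  constructor
  · intro P hP
    rw [rT] at hP
    simp only [List.mem_map] at hP
    obtain ⟨Q, hQ, rfl⟩ := hP
    exact rP_radOK (h1 Q hQ)
  · rw [rT]
    simp only [List.map_map]
    have hc : (t.1.comp (-X)).natDegree = t.1.natDegree := by
      rw [Polynomial.natDegree_comp]; simp
    rw [hc]
    have : t.2.map (Polynomial.natDegree ∘ rP) = t.2.map Polynomial.natDegree :=
      List.map_congr_left (fun P _ => by simp [Function.comp_apply, rP_natDegree])
    rw [this]
    exact h2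

lemma rT_termMeasure (t : Polynomial ℝ × List (Polynomial ℝ)) :
    termMeasure (rT t) = termMeasure t := by
  rw [rT, termMeasure, termMeasure]
  simp only [List.map_map]
  exact congrArg List.sum (List.map_congr_left (fun P _ => by simp [Function.comp_apply, rP_natDegree]))

lemma rT_tmeasure (terms : List (Polynomial ℝ × List (Polynomial ℝ))) :
    tmeasure (terms.map rT) = tmeasure terms := by
  rw [tmeasure_eq, tmeasure_eq, List.map_map]
  exact congrArg List.sum (List.map_congr_left (fun t _ => by
    simp only [Function.comp_apply]; exact rT_termMeasure t))

lemma rT_gfun (terms : List (Polynomial ℝ × List (Polynomial ℝ))) (x : ℝ) :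
    gfun (terms.map rT) x = gfun terms (-x) := by
  unfold gfun
  rw [List.map_map]
  refine congrArg List.sum (List.map_congr_left (fun t _ => ?_))
  simp only [Function.comp_apply, rT, Polynomial.eval_comp]
  simp only [Polynomial.eval_neg, Polynomial.eval_X]
  congr 1
  rw [List.map_map]
  exact congrArg List.prod (List.map_congr_left (fun P _ => by
    simp [Function.comp_apply, rP_eval]))

lemma natDegree_list_sum_le (d : ℕ) (l : List (Polynomial ℝ))
    (h : ∀ P ∈ l, P.natDegree ≤ d) : l.sum.natDegree ≤ d := by
  induction l with
  | nil => simp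
  | cons P l ih =>
    rw [List.sum_cons]
    refine (Polynomial.natDegree_add_le _ _).trans ?_
    exact max_le (h P (by simp)) (ih (fun Q hQ => h Q (by simp [hQ])))

lemma terminal_case (d : ℕ) (terms : List (Polynomial ℝ × List (Polynomial ℝ))) (gt : ℝ → ℝ)
    (a b : ℝ) (hab : a < b)
    (hOK : ∀ t ∈ terms, TermOK d t) (hgt : ∀ x, AnalyticAt ℝ gt x)
    (heq : ∀ x ∈ Set.Ioo a b, gt x = gfun terms x)
    (hnil : ∀ t ∈ terms, t.2 = []) :
    ∃ Pol : Polynomial ℝ, Pol.natDegree ≤ d ∧ ∀ x : ℝ, gt x = Pol.eval x := by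
  set Pol : Polynomial ℝ := (terms.map Prod.fst).sum with hPoldef
  have hdeg : Pol.natDegree ≤ d := by
    refine natDegree_list_sum_le d _ ?_
    intro P hP
    rw [List.mem_map] at hP
    obtain ⟨t, ht, rfl⟩ := hP
    have := (hOK t ht).2
    rw [hnil t ht] at this
    simp at this
    omega
  have hgf : ∀ x, gfun terms x = Pol.eval x := by
    intro x
    have hms : Polynomial.eval x ((terms.map Prod.fst).sum)
        = ((terms.map Prod.fst).map (fun P => Polynomial.eval x P)).sum := by
      simpa using map_list_sum (Polynomial.evalRingHom x) (terms.map Prod.fst)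
    rw [hPoldef, hms, gfun, List.map_map]
    refine congrArg List.sum (List.map_congr_left (fun t ht => ?_))
    simp only [Function.comp_apply]
    rw [hnil t ht]
    simp
  refine ⟨Pol, hdeg, ?_⟩
  have h1 : AnalyticOnNhd ℝ gt (Set.univ : Set ℝ) := fun x _ => hgt x
  have h2 : AnalyticOnNhd ℝ (fun x => Pol.eval x) (Set.univ : Set ℝ) := fun x _ =>
    analyticAt_eval Pol x
  have hev : gt =ᶠ[𝓝 ((a+b)/2)] (fun x => Pol.eval x) := by
    refine eventually_of_mem (isOpen_Ioo.mem_nhds (⟨by linarith, by linarith⟩ :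
      (a+b)/2 ∈ Set.Ioo a b)) ?_
    intro x hx
    rw [heq x hx, hgf x]
  exact fun x => h1.eqOn_of_preconnected_of_eventuallyEq h2 isPreconnected_univ
    (Set.mem_univ _) hev (Set.mem_univ x)

lemma absorbstep (d : ℕ) (terms : List (Polynomial ℝ × List (Polynomial ℝ)))
    (a b : ℝ) (hab : a < b)
    (hOK : ∀ t ∈ terms, TermOK d t)
    (hpos : ∀ x ∈ Set.Ioo a b, ∀ t ∈ terms, ∀ P ∈ t.2, 0 < P.eval x)
    (hconst : ∃ t ∈ terms, ∃ P ∈ t.2, P.natDegree = 0) :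
    ∃ terms' : List (Polynomial ℝ × List (Polynomial ℝ)),
      tmeasure terms' < tmeasure terms ∧ (∀ t ∈ terms', TermOK d t) ∧
      (∀ x ∈ Set.Ioo a b, ∀ t ∈ terms', ∀ P ∈ t.2, 0 < P.eval x) ∧
      (∀ x, gfun terms' x = gfun terms x) := by
  classical
  obtain ⟨t₀, ht₀, P₀, hP₀, hdeg0⟩ := hconst
  obtain ⟨c, hc⟩ := Polynomial.natDegree_eq_zero.1 hdeg0
  have hcpos : 0 < c := by
    have := hpos ((a+b)/2) ⟨by linarith, by linarith⟩ t₀ ht₀ P₀ hP₀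
    rwa [← hc, Polynomial.eval_C] at this
  obtain ⟨s, u, rfl⟩ := List.append_of_mem ht₀
  obtain ⟨s', u', hPs⟩ := List.append_of_mem hP₀
  set newterm : Polynomial ℝ × List (Polynomial ℝ) :=
    (Polynomial.C (Real.sqrt c) * t₀.1, s' ++ u') with hnewdef
  refine ⟨s ++ newterm :: u, ?_, ?_, ?_, ?_⟩
  · rw [tmeasure_eq, tmeasure_eq]
    simp only [List.map_append, List.map_cons, List.sum_append, List.sum_cons]
    have h1 : termMeasure newterm < termMeasure t₀ := by
      rw [hnewdef, termMeasure, termMeasure, hPs]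
      simp only [List.map_append, List.map_cons, List.sum_append, List.sum_cons]
      omega
    omega
  · intro t ht
    rcases List.mem_append.1 ht with h | h
    · exact hOK t (by simp [h])
    rcases List.mem_cons.1 h with rfl | h
    · have hOK₀ := hOK t₀ (by simp)
      constructor
      · intro P hP
        refine hOK₀.1 P ?_
        rw [hPs]
        rcases List.mem_append.1 hP with h | h
        · simp [h]
        · simp [h]
      · rw [hnewdef]
        simp only
        have hd1 : (Polynomial.C (Real.sqrt c) * t₀.1).natDegree ≤ t₀.1.natDegree := by
          refine (Polynomial.natDegree_mul_le).trans ?_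
          simp
        have hd2 : ((s' ++ u').map Polynomial.natDegree).sum
            ≤ (t₀.2.map Polynomial.natDegree).sum := by
          rw [hPs]
          simp only [List.map_append, List.map_cons, List.sum_append, List.sum_cons]
          omega
        have := hOK₀.2
        omega
    · exact hOK t (by simp [h])
  · intro x hx t ht P hP
    rcases List.mem_append.1 ht with h | h
    · exact hpos x hx t (by simp [h]) P hP
    rcases List.mem_cons.1 h with rfl | h
    · refine hpos x hx t₀ (by simp) P ?_
      rw [hPs]
      rcases List.mem_append.1 hP with h | h
      · simp [h]
      · simp [h]
    · exact hpos x hx t (by simp [h]) P hP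
  · intro x
    unfold gfun
    simp only [List.map_append, List.map_cons, List.sum_append, List.sum_cons]
    have key : Polynomial.eval x (Polynomial.C (Real.sqrt c) * t₀.1) *
        ((List.map (fun P => Real.sqrt (P.eval x)) s' ++
          List.map (fun P => Real.sqrt (P.eval x)) u')).prod
        = t₀.1.eval x * (t₀.2.map fun P => Real.sqrt (P.eval x)).prod := by
      rw [hPs]
      simp only [List.map_append, List.map_cons, List.prod_append, List.prod_cons,
        Polynomial.eval_mul, Polynomial.eval_C]
      rw [← hc, Polynomial.eval_C]
      ring
    simp only [hnewdef, List.map_append]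
    linarith [key]

end chunk6

section chunk7
open Polynomial Set

lemma mainlemma (d : ℕ) : ∀ (n : ℕ) (terms : List (Polynomial ℝ × List (Polynomial ℝ)))
    (gt : ℝ → ℝ) (a b : ℝ), tmeasure terms ≤ n → a < b →
    (∀ t ∈ terms, TermOK d t) → (∀ x, AnalyticAt ℝ gt x) →
    (∀ x ∈ Set.Ioo a b, ∀ t ∈ terms, ∀ P ∈ t.2, 0 < P.eval x) →
    (∀ x ∈ Set.Ioo a b, gt x = gfun terms x) →
    ∃ Pol : Polynomial ℝ, Pol.natDegree ≤ d ∧ ∀ x : ℝ, gt x = Pol.eval x := by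
  intro n
  induction n with
  | zero =>
    intro terms gt a b hm hab hOK hgt hpos heq
    refine terminal_case d terms gt a b hab hOK hgt heq ?_
    intro t ht
    by_contra hne
    obtain ⟨P, hP⟩ := List.exists_mem_of_ne_nil _ hne
    have h1 : 1 ≤ termMeasure t := by
      have := le_sum_of_mem' t.2 (fun P => 1 + P.natDegree) P hP
      unfold termMeasure
      omega
    have h2 : termMeasure t ≤ tmeasure terms := by
      rw [tmeasure_eq]
      exact le_sum_of_mem' terms termMeasure t ht
    omega
  | succ n ih =>
    intro terms gt a b hm hab hOK hgt hpos heq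
    by_cases hnil : ∀ t ∈ terms, t.2 = []
    · exact terminal_case d terms gt a b hab hOK hgt heq hnil
    push_neg at hnil
    obtain ⟨t₂, ht₂, hne₂⟩ := hnil
    by_cases hconst : ∃ t ∈ terms, ∃ P ∈ t.2, P.natDegree = 0
    · obtain ⟨terms', hlt, hOK', hpos', hgeq⟩ := absorbstep d terms a b hab hOK hpos hconst
      refine ih terms' gt a b (by omega) hab hOK' hgt hpos' ?_
      intro x hx
      rw [heq x hx]
      exact (hgeq x).symm
    · push_neg at hconst
      obtain ⟨P₂, hP₂⟩ := List.exists_mem_of_ne_nil _ hne₂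
      have hrOK : RadOK P₂ := (hOK t₂ ht₂).1 P₂ hP₂
      obtain ⟨r, hr⟩ := hrOK.2.2.2 (hconst t₂ ht₂ P₂ hP₂)
      have hrout : r ≤ a ∨ b ≤ r := by
        by_contra hro
        push_neg at hro
        exact (ne_of_gt (hpos r ⟨hro.1, hro.2⟩ t₂ ht₂ P₂ hP₂)) hr
      rcases hrout with hra | hrb
      · -- reflect to the left case
        set gt' : ℝ → ℝ := fun x => gt (-x) with hgt'def
        have hgt' : ∀ x, AnalyticAt ℝ gt' x := by
          intro x
          exact (hgt (-x)).comp ((analyticAt_id).neg)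
        have hposr : ∀ x ∈ Set.Ioo (-b) (-a), ∀ t ∈ terms.map rT, ∀ P ∈ t.2, 0 < P.eval x := by
          intro x hx t ht P hP
          obtain ⟨t', ht', rfl⟩ := List.mem_map.1 ht
          rw [rT] at hP
          simp only [List.mem_map] at hP
          obtain ⟨Q, hQ, rfl⟩ := hP
          rw [rP_eval]
          exact hpos (-x) ⟨by linarith [hx.2], by linarith [hx.1]⟩ t' ht' Q hQ
        have heqr : ∀ x ∈ Set.Ioo (-b) (-a), gt' x = gfun (terms.map rT) x := by
          intro x hx
          rw [rT_gfun, hgt'def]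
          exact heq (-x) ⟨by linarith [hx.2], by linarith [hx.1]⟩
        have hrootr : ∃ t ∈ terms.map rT, ∃ P ∈ t.2, ∃ r', -a ≤ r' ∧ P.eval r' = 0 := by
          refine ⟨rT t₂, List.mem_map.2 ⟨t₂, ht₂, rfl⟩, rP P₂, ?_, -r, by linarith, ?_⟩
          · rw [rT]
            exact List.mem_map.2 ⟨P₂, hP₂, rfl⟩
          · rw [rP_eval, neg_neg]
            exact hr
        obtain ⟨terms'', a'', b'', hlt'', hOK'', hab'', hpos'', heq''⟩ :=
          rightstep d (terms.map rT) gt' (-b) (-a) (by linarith)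
            (fun t ht => by
              obtain ⟨t', ht', rfl⟩ := List.mem_map.1 ht
              exact rT_termOK (hOK t' ht'))
            hgt' hposr heqr hrootr
        rw [rT_tmeasure] at hlt''
        obtain ⟨Pol', hPd', hPe'⟩ :=
          ih terms'' gt' a'' b'' (by omega) hab'' hOK'' hgt' hpos'' heq''
        refine ⟨Pol'.comp (-X), ?_, ?_⟩
        · rw [Polynomial.natDegree_comp]
          simpa using hPd'
        · intro x
          have h1 : gt x = gt' (-x) := by rw [hgt'def]; simp
          rw [h1, hPe' (-x), Polynomial.eval_comp]
          simp
      · obtain ⟨terms'', a'', b'', hlt'', hOK'', hab'', hpos'', heq''⟩ :=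
          rightstep d terms gt a b hab hOK hgt hpos heq
            ⟨t₂, ht₂, P₂, hP₂, r, hrb, hr⟩
        exact ih terms'' gt a'' b'' (by omega) hab'' hOK'' hgt hpos'' heq''

end chunk7

section final
open Polynomial Set

lemma list_sum_map_le_const {α : Type*} (l : List α) (f : α → ℕ) (c : ℕ)
    (h : ∀ a ∈ l, f a ≤ c) : (l.map f).sum ≤ c * l.length := by
  induction l with
  | nil => simp
  | cons a l ih =>
    simp only [List.map_cons, List.sum_cons, List.length_cons]
    have := ih (fun b hb => h b (by simp [hb]))
    have := h a (by simp)
    calc f a + (l.map f).sum ≤ c + c * l.length := by omega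
      _ = c * (l.length + 1) := by ring

theorem scMonomial_analytic_continuation_is_polynomial'
    (m d : ℕ) (p q : Fin m → ℕ)
    (A B : (j : Fin m) → Fin (p j) → ℝ)
    (U V : (j : Fin m) → Fin (q j) → ℝ)
    (hdeg : ∀ j, p j + q j ≤ d)
    (α : Fin m → ℝ)
    (I : Set ℝ) (hI : I = {x : ℝ | ∀ (j : Fin m) (l : Fin (q j)), |U j l * x + V j l| < 1})
    (hne : I.Nonempty)
    (gt : ℝ → ℝ) (hgt : ∀ x : ℝ, AnalyticAt ℝ gt x)
    (hres : ∀ x ∈ I, gt x =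
      ∑ j, α j * ((∏ i, (A j i * x + B j i)) *
        ∏ l, Real.sqrt (1 - (U j l * x + V j l) ^ 2))) :
    ∃ P : Polynomial ℝ, P.natDegree ≤ d ∧ ∀ x : ℝ, gt x = P.eval x := by
  classical
  obtain ⟨xb, hxb⟩ := hne
  have hxbI : ∀ (j : Fin m) (l : Fin (q j)), |U j l * xb + V j l| < 1 := by
    rw [hI] at hxb; exact hxb
  -- the radicand polynomials and coefficient polynomials
  set Q : (j : Fin m) → Fin (q j) → Polynomial ℝ :=
    fun j l => C 1 - (C (U j l) * X + C (V j l))^2 with hQdef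
  set Rj : Fin m → Polynomial ℝ :=
    fun j => C (α j) * ∏ i, (C (A j i) * X + C (B j i)) with hRdef
  have hQeval : ∀ j l (x : ℝ), (Q j l).eval x = 1 - (U j l * x + V j l)^2 := by
    intro j l x
    simp [hQdef]
  have hReval : ∀ j (x : ℝ), (Rj j).eval x = α j * ∏ i, (A j i * x + B j i) := by
    intro j x
    simp [hRdef, Polynomial.eval_prod]
  set terms : List (Polynomial ℝ × List (Polynomial ℝ)) :=
    List.ofFn (fun j : Fin m => (Rj j, List.ofFn (fun l : Fin (q j) => Q j l))) with htermsdef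
  -- openness of I and an interval around xb
  have hIopen : IsOpen I := by
    rw [hI]
    simp only [Set.setOf_forall]
    refine isOpen_iInter_of_finite (fun j => isOpen_iInter_of_finite (fun l => ?_))
    exact isOpen_lt (((continuous_const.mul continuous_id).add continuous_const).abs)
      continuous_const
  obtain ⟨ε, hε, hball⟩ := Metric.isOpen_iff.1 hIopen xb hxb
  have hIoosub : Set.Ioo (xb - ε) (xb + ε) ⊆ I := by
    rw [← Real.ball_eq_Ioo]
    exact hball
  have hab : xb - ε < xb + ε := by linarith
  -- properties of radicands
  have hQpos : ∀ x ∈ I, ∀ j l, 0 < (Q j l).eval x := by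
    intro x hx j l
    rw [hI] at hx
    have := hx j l
    rw [hQeval]
    have h2 := abs_lt.1 this
    nlinarith [h2.1, h2.2]
  have hQne : ∀ j l, Q j l ≠ 0 := by
    intro j l hc
    have := hQpos xb hxb j l
    rw [hc] at this
    simp at this
  have hQdeg : ∀ j l, (Q j l).natDegree ≤ 2 := by
    intro j l
    rw [hQdef]
    refine (Polynomial.natDegree_sub_le _ _).trans ?_
    simp only [Polynomial.natDegree_C]
    refine max_le (by omega) ?_
    refine (Polynomial.natDegree_pow_le).trans ?_
    have h1 : (C (U j l) * X + C (V j l)).natDegree ≤ 1 := by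
      refine (Polynomial.natDegree_add_le _ _).trans ?_
      refine max_le ((Polynomial.natDegree_C_mul_le _ _).trans (by simp)) (by simp)
    omega
  have hUne : ∀ j l, (Q j l).natDegree ≠ 0 → U j l ≠ 0 := by
    intro j l hd hu
    apply hd
    have : Q j l = C (1 - (V j l)^2) := by
      rw [hQdef]
      simp only [hu, map_zero, zero_mul, zero_add]
      rw [← Polynomial.C_pow, ← Polynomial.C_sub]
    rw [this, Polynomial.natDegree_C]
  have hQrad : ∀ j l, RadOK (Q j l) := by
    intro j l
    refine ⟨hQne j l, hQdeg j l, ?_, ?_⟩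
    · intro x hx
      rw [hQeval] at hx
      by_cases hu : U j l = 0
      · exfalso
        have h1 := hxbI j l
        rw [hu] at h1 hx
        simp at h1 hx
        nlinarith [abs_lt.1 h1]
      · have hder : (Q j l).derivative = -(C 2 * (C (U j l) * X + C (V j l)) * C (U j l)) := by
          rw [hQdef]
          rw [Polynomial.derivative_sub, Polynomial.derivative_C, Polynomial.derivative_pow,
            Polynomial.derivative_add, Polynomial.derivative_C,
            Polynomial.derivative_C_mul, Polynomial.derivative_X]
          simp
          try ring
        rw [hder]
        simp only [Polynomial.eval_neg, Polynomial.eval_mul, Polynomial.eval_C,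
          Polynomial.eval_add, Polynomial.eval_X]
        intro hc
        have hc' : (2:ℝ) * (U j l * x + V j l) * U j l = 0 := by linarith [hc]
        rcases mul_eq_zero.1 hc' with h1 | h1
        · rcases mul_eq_zero.1 h1 with h1 | h1
          · norm_num at h1
          · rw [h1] at hx
            norm_num at hx
        · exact hu h1
    · intro hd
      have hu := hUne j l hd
      refine ⟨(1 - V j l)/(U j l), ?_⟩
      rw [hQeval]
      field_simp
      ring
  -- TermOK
  have hTermOK : ∀ t ∈ terms, TermOK d t := by
    intro t ht
    rw [htermsdef, List.mem_ofFn] at ht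
    obtain ⟨j, rfl⟩ := ht
    constructor
    · intro P hP
      simp only [List.mem_ofFn] at hP
      obtain ⟨l, rfl⟩ := hP
      exact hQrad j l
    · simp only
      have h1 : (Rj j).natDegree ≤ p j := by
        rw [hRdef]
        refine (Polynomial.natDegree_C_mul_le _ _).trans ?_
        refine (Polynomial.natDegree_prod_le _ _).trans ?_
        have : ∀ i ∈ Finset.univ, (C (A j i) * X + C (B j i)).natDegree ≤ 1 := by
          intro i _
          refine (Polynomial.natDegree_add_le _ _).trans ?_
          exact max_le ((Polynomial.natDegree_C_mul_le _ _).trans (by simp)) (by simp)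
        have hsum : ∑ i, (C (A j i) * X + C (B j i)).natDegree
            ≤ ∑ _i : Fin (p j), (1 : ℕ) := Finset.sum_le_sum this
        simpa using hsum
      have h2 : ((List.ofFn (fun l : Fin (q j) => Q j l)).map Polynomial.natDegree).sum
          ≤ 2 * q j := by
        refine (list_sum_map_le_const _ _ 2 ?_).trans ?_
        · intro P hP
          simp only [List.mem_ofFn] at hP
          obtain ⟨l, rfl⟩ := hP
          exact hQdeg j l
        · simp
      have := hdeg j
      omega
  -- positivity
  have hposI : ∀ x ∈ Set.Ioo (xb - ε) (xb + ε), ∀ t ∈ terms, ∀ P ∈ t.2, 0 < P.eval x := by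
    intro x hx t ht P hP
    rw [htermsdef, List.mem_ofFn] at ht
    obtain ⟨j, rfl⟩ := ht
    simp only [List.mem_ofFn] at hP
    obtain ⟨l, rfl⟩ := hP
    exact hQpos x (hIoosub hx) j l
  -- equality
  have heqI : ∀ x ∈ Set.Ioo (xb - ε) (xb + ε), gt x = gfun terms x := by
    intro x hx
    rw [hres x (hIoosub hx), gfun, htermsdef]
    rw [List.map_ofFn, List.sum_ofFn]
    refine Finset.sum_congr rfl (fun j _ => ?_)
    simp only [Function.comp_apply]
    rw [hReval, List.map_ofFn, List.prod_ofFn]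
    simp only [Function.comp_apply, hQeval]
    ring
  exact mainlemma d (tmeasure terms) terms gt (xb - ε) (xb + ε) (le_refl _) hab
    hTermOK hgt hposI heqI

end final

/-- STATEMENT 14 (Lemma on sc-monomials): let `μ_1, …, μ_m` be sc-monomials
`μ_j(x) = Π_i (A_{j,i} x + B_{j,i}) · Π_l √(1 - (U_{j,l} x + V_{j,l})²)` of degrees
`p_j + q_j ≤ d`, with nonempty common interval of definition
`I = { x : |U_{j,l} x + V_{j,l}| < 1 for all j, l }`, and let `g = Σ_j α_j μ_j` on `I`.
If a real-analytic function `g̃ : ℝ → ℝ` restricts to `g` on `I`, then `g̃` is a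
polynomial of degree at most `d`. -/
theorem scMonomial_analytic_continuation_is_polynomial
    (m d : ℕ) (p q : Fin m → ℕ)
    (A B : (j : Fin m) → Fin (p j) → ℝ)
    (U V : (j : Fin m) → Fin (q j) → ℝ)
    (hdeg : ∀ j, p j + q j ≤ d)
    (α : Fin m → ℝ)
    (I : Set ℝ) (hI : I = {x : ℝ | ∀ (j : Fin m) (l : Fin (q j)), |U j l * x + V j l| < 1})
    (hne : I.Nonempty)
    (gt : ℝ → ℝ) (hgt : ∀ x : ℝ, AnalyticAt ℝ gt x)
    (hres : ∀ x ∈ I, gt x =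
      ∑ j, α j * ((∏ i, (A j i * x + B j i)) *
        ∏ l, Real.sqrt (1 - (U j l * x + V j l) ^ 2))) :
    ∃ P : Polynomial ℝ, P.natDegree ≤ d ∧ ∀ x : ℝ, gt x = P.eval x := by
  exact scMonomial_analytic_continuation_is_polynomial' m d p q A B U V hdeg α I hI hne gt hgt hres
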